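/- Let M = (E, ρ) be a simple binary matroid that contains no isthmuses. Then every cyclic flat Y of M equals the union of the atoms of the lattice of cyclic flats Z(M) that are contained in Y; in particular, the lattice of cyclic flats Z(M) is atomic. -/

import Mathlib

open Finset

structure FinMatroid (α : Type*) [DecidableEq α] where
  E : Finset α
  rk : Finset α → ℕ
  rk_le_card : ∀ A, A ⊆ E → rk A ≤ A.card
  rk_mono : ∀ A B, A ⊆ B → B ⊆ E → rk A ≤ rk B
  rk_submod : ∀ A B, A ⊆ E → B ⊆ E → rk (A ∪ B) + rk (A ∩ B) ≤ rk A + rk B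

namespace FinMatroid

variable {α : Type*} [DecidableEq α]

/-- The closure operator `cl(A) = {e ∈ E : ρ(A ∪ {e}) = ρ(A)}`. -/
def cl (M : FinMatroid α) (A : Finset α) : Finset α :=
  M.E.filter fun e => M.rk (insert e A) = M.rk A

/-- The cyclic operator `cyc(A) = {e ∈ A : ρ(A − {e}) = ρ(A)}`. -/
def cyc (M : FinMatroid α) (A : Finset α) : Finset α :=
  A.filter fun e => M.rk (A.erase e) = M.rk A

/-- A flat is a set fixed by the closure operator. -/
def IsFlat (M : FinMatroid α) (F : Finset α) : Prop :=
  F ⊆ M.E ∧ M.cl F = F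

/-- A cyclic set is a set fixed by the cyclic operator. -/
def IsCyclic (M : FinMatroid α) (U : Finset α) : Prop :=
  U ⊆ M.E ∧ M.cyc U = U

/-- A cyclic flat is a set fixed by both the closure and the cyclic operators. -/
def IsCyclicFlat (M : FinMatroid α) (Z : Finset α) : Prop :=
  Z ⊆ M.E ∧ M.cl Z = Z ∧ M.cyc Z = Z

/-- The minor `M|Y/X`: restriction to `Y` followed by contraction of `X`. -/
def minor (M : FinMatroid α) (X Y : Finset α) (hXY : X ⊆ Y) (hY : Y ⊆ M.E) :
    FinMatroid α where
  E := Y \ X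
  rk A := M.rk (A ∪ X) - M.rk X
  rk_le_card := by
    intro A hA
    have hAE : A ⊆ M.E := fun a ha => hY (mem_sdiff.mp (hA ha)).1
    have hXE : X ⊆ M.E := hXY.trans hY
    have h1 := M.rk_submod A X hAE hXE
    have h2 := M.rk_le_card A hAE
    show M.rk (A ∪ X) - M.rk X ≤ A.card
    omega
  rk_mono := by
    intro A B hAB hB
    have hBE : B ⊆ M.E := fun a ha => hY (mem_sdiff.mp (hB ha)).1
    have hBX : B ∪ X ⊆ M.E := union_subset hBE (hXY.trans hY)
    have := M.rk_mono (A ∪ X) (B ∪ X) (union_subset_union hAB Subset.rfl) hBX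
    show M.rk (A ∪ X) - M.rk X ≤ M.rk (B ∪ X) - M.rk X
    omega
  rk_submod := by
    intro A B hA hB
    have hAE : A ⊆ M.E := fun a ha => hY (mem_sdiff.mp (hA ha)).1
    have hBE : B ⊆ M.E := fun a ha => hY (mem_sdiff.mp (hB ha)).1
    have hXE : X ⊆ M.E := hXY.trans hY
    have hAX : A ∪ X ⊆ M.E := union_subset hAE hXE
    have hBX : B ∪ X ⊆ M.E := union_subset hBE hXE
    have hsub := M.rk_submod (A ∪ X) (B ∪ X) hAX hBX
    have e1 : (A ∪ X) ∪ (B ∪ X) = (A ∪ B) ∪ X := by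
      ext x; simp only [mem_union]; tauto
    have e2 : (A ∪ X) ∩ (B ∪ X) = (A ∩ B) ∪ X := by
      ext x; simp only [mem_union, mem_inter]; tauto
    rw [e1, e2] at hsub
    have h1 : M.rk X ≤ M.rk (A ∪ X) := M.rk_mono X _ subset_union_right hAX
    have h2 : M.rk X ≤ M.rk (B ∪ X) := M.rk_mono X _ subset_union_right hBX
    have hIX : (A ∩ B) ∪ X ⊆ M.E := union_subset (inter_subset_left.trans hAE) hXE
    have hUX : (A ∪ B) ∪ X ⊆ M.E := union_subset (union_subset hAE hBE) hXE
    have h3 : M.rk X ≤ M.rk ((A ∩ B) ∪ X) := M.rk_mono X _ subset_union_right hIX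
    have h4 : M.rk X ≤ M.rk ((A ∪ B) ∪ X) := M.rk_mono X _ subset_union_right hUX
    show M.rk ((A ∪ B) ∪ X) - M.rk X + (M.rk ((A ∩ B) ∪ X) - M.rk X) ≤
      (M.rk (A ∪ X) - M.rk X) + (M.rk (B ∪ X) - M.rk X)
    omega

/-- The restriction `M|Y`. -/
def restrict (M : FinMatroid α) (Y : Finset α) (hY : Y ⊆ M.E) : FinMatroid α where
  E := Y
  rk := M.rk
  rk_le_card := fun A hA => M.rk_le_card A (hA.trans hY)
  rk_mono := fun A B hAB hB => M.rk_mono A B hAB (hB.trans hY)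
  rk_submod := fun A B hA hB => M.rk_submod A B (hA.trans hY) (hB.trans hY)

/-- `M` is binary: it is the matroid of linear dependence of a family of
vectors over the field with two elements. -/
def IsBinary (M : FinMatroid α) : Prop :=
  ∃ (m : ℕ) (φ : α → (Fin m → ZMod 2)),
    ∀ A : Finset α, A ⊆ M.E →
      M.rk A = Module.finrank (ZMod 2) (Submodule.span (ZMod 2) (φ '' (A : Set α)))

def Simple (M : FinMatroid α) : Prop :=
  (∀ e ∈ M.E, M.rk {e} = 1) ∧
    ∀ e ∈ M.E, ∀ f ∈ M.E, e ≠ f → M.rk ({e, f} : Finset α) = 2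

def NoIsthmus (M : FinMatroid α) : Prop :=
  ∀ e ∈ M.E, M.rk (M.E.erase e) = M.rk M.E

def IsMinDist (M : FinMatroid α) (d : ℕ) : Prop :=
  (∃ X ⊆ M.E, M.rk (M.E \ X) < M.rk M.E ∧ X.card = d) ∧
    ∀ X ⊆ M.E, M.rk (M.E \ X) < M.rk M.E → d ≤ X.card

def IsAtomCF (M : FinMatroid α) (Z : Finset α) : Prop :=
  M.IsCyclicFlat Z ∧ Z ≠ ∅ ∧ ¬ ∃ Z', M.IsCyclicFlat Z' ∧ ∅ ⊂ Z' ∧ Z' ⊂ Z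

def IsCoatomCF (M : FinMatroid α) (Z : Finset α) : Prop :=
  M.IsCyclicFlat Z ∧ Z ⊂ M.E ∧ ¬ ∃ Z', M.IsCyclicFlat Z' ∧ Z ⊂ Z' ∧ Z' ⊂ M.E

def IsCircuit (M : FinMatroid α) (C : Finset α) : Prop :=
  C ⊆ M.E ∧ M.rk C < C.card ∧ ∀ D ⊂ C, M.rk D = D.card

end FinMatroid
section Aux

open Finset

namespace FinMatroid

variable {α : Type*} [DecidableEq α] (M : FinMatroid α)

lemma mem_cl_iff {A : Finset α} {e : α} :
    e ∈ M.cl A ↔ e ∈ M.E ∧ M.rk (insert e A) = M.rk A := Finset.mem_filter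

lemma cl_subset_ground (A : Finset α) : M.cl A ⊆ M.E := Finset.filter_subset _ _

lemma subset_cl {A : Finset α} (hA : A ⊆ M.E) : A ⊆ M.cl A := fun e he =>
  (M.mem_cl_iff).mpr ⟨hA he, by rw [Finset.insert_eq_self.mpr he]⟩

lemma rk_union_cl_subset {A B : Finset α} (hA : A ⊆ M.E) (hB : B ⊆ M.cl A) :
    M.rk (A ∪ B) = M.rk A := by
  classical
  induction B using Finset.induction_on with
  | empty => simp
  | @insert a B haB ih =>
    have haE : a ∈ M.E := (M.cl_subset_ground A) (hB (Finset.mem_insert_self a B))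
    have hBcl : B ⊆ M.cl A := fun b hb => hB (Finset.mem_insert_of_mem hb)
    have ihB : M.rk (A ∪ B) = M.rk A := ih hBcl
    have hBE : B ⊆ M.E := hBcl.trans (M.cl_subset_ground A)
    have ha : M.rk (insert a A) = M.rk A :=
      ((M.mem_cl_iff).mp (hB (Finset.mem_insert_self a B))).2
    have hABE : A ∪ B ⊆ M.E := Finset.union_subset hA hBE
    have hiAE : insert a A ⊆ M.E := Finset.insert_subset haE hA
    have hsub := M.rk_submod (A ∪ B) (insert a A) hABE hiAE
    have e1 : (A ∪ B) ∪ insert a A = insert a (A ∪ B) := by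
      ext y; simp only [Finset.mem_union, Finset.mem_insert]; tauto
    rw [e1] at hsub
    have h2 : M.rk A ≤ M.rk ((A ∪ B) ∩ insert a A) := by
      apply M.rk_mono
      · intro y hy; simp only [Finset.mem_inter, Finset.mem_union, Finset.mem_insert]; tauto
      · exact (Finset.inter_subset_left).trans hABE
    have h3 : M.rk (A ∪ B) ≤ M.rk (insert a (A ∪ B)) :=
      M.rk_mono _ _ (Finset.subset_insert _ _) (Finset.insert_subset haE hABE)
    have e2 : A ∪ insert a B = insert a (A ∪ B) := by
      ext y; simp only [Finset.mem_union, Finset.mem_insert]; tauto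
    rw [e2]
    omega

lemma rk_cl {A : Finset α} (hA : A ⊆ M.E) : M.rk (M.cl A) = M.rk A := by
  have := M.rk_union_cl_subset hA (Finset.Subset.refl _)
  rwa [Finset.union_eq_right.mpr (M.subset_cl hA)] at this

lemma cl_mono {A B : Finset α} (hAB : A ⊆ B) (hB : B ⊆ M.E) : M.cl A ⊆ M.cl B := by
  intro e he
  obtain ⟨heE, hrk⟩ := (M.mem_cl_iff).mp he
  have hA : A ⊆ M.E := hAB.trans hB
  have hsub := M.rk_submod B (insert e A) hB (Finset.insert_subset heE hA)
  have e1 : B ∪ insert e A = insert e B := by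
    ext y; simp only [Finset.mem_union, Finset.mem_insert]
    tauto
  rw [e1] at hsub
  have h2 : M.rk A ≤ M.rk (B ∩ insert e A) := by
    apply M.rk_mono
    · intro y hy; simp only [Finset.mem_inter, Finset.mem_insert]
      exact ⟨hAB hy, Or.inr hy⟩
    · exact (Finset.inter_subset_left).trans hB
  have h3 : M.rk B ≤ M.rk (insert e B) :=
    M.rk_mono _ _ (Finset.subset_insert _ _) (Finset.insert_subset heE hB)
  exact (M.mem_cl_iff).mpr ⟨heE, by omega⟩

lemma cl_cl {A : Finset α} (hA : A ⊆ M.E) : M.cl (M.cl A) = M.cl A := by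
  apply Finset.Subset.antisymm
  · intro e he
    obtain ⟨heE, hrk⟩ := (M.mem_cl_iff).mp he
    rw [M.rk_cl hA] at hrk
    have hle : M.rk (insert e A) ≤ M.rk (insert e (M.cl A)) :=
      M.rk_mono _ _ (Finset.insert_subset_insert _ (M.subset_cl hA))
        (Finset.insert_subset heE (M.cl_subset_ground A))
    have hge : M.rk A ≤ M.rk (insert e A) :=
      M.rk_mono _ _ (Finset.subset_insert _ _) (Finset.insert_subset heE hA)
    exact (M.mem_cl_iff).mpr ⟨heE, by omega⟩
  · exact M.subset_cl (M.cl_subset_ground A)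

lemma cyc_eq_self_iff {A : Finset α} :
    M.cyc A = A ↔ ∀ e ∈ A, M.rk (A.erase e) = M.rk A := Finset.filter_eq_self

lemma isCyclicFlat_cl {S : Finset α} (hS : S ⊆ M.E)
    (hcyc : ∀ e ∈ S, M.rk (S.erase e) = M.rk S) : M.IsCyclicFlat (M.cl S) := by
  refine ⟨M.cl_subset_ground S, M.cl_cl hS, (M.cyc_eq_self_iff).mpr ?_⟩
  intro e he
  have hrkcl : M.rk (M.cl S) = M.rk S := M.rk_cl hS
  have hsubE : (M.cl S).erase e ⊆ M.E := (Finset.erase_subset _ _).trans (M.cl_subset_ground S)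
  have hup : M.rk ((M.cl S).erase e) ≤ M.rk (M.cl S) :=
    M.rk_mono _ _ (Finset.erase_subset _ _) (M.cl_subset_ground S)
  by_cases heS : e ∈ S
  · have h1 : S.erase e ⊆ (M.cl S).erase e :=
      Finset.erase_subset_erase _ (M.subset_cl hS)
    have h2 : M.rk (S.erase e) ≤ M.rk ((M.cl S).erase e) := M.rk_mono _ _ h1 hsubE
    have := hcyc e heS
    omega
  · have h1 : S ⊆ (M.cl S).erase e := fun s hs =>
      Finset.mem_erase.mpr ⟨fun h => heS (h ▸ hs), M.subset_cl hS hs⟩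
    have h2 : M.rk S ≤ M.rk ((M.cl S).erase e) := M.rk_mono _ _ h1 hsubE
    omega

lemma rk_eq_card_of_subset {A B : Finset α} (hAB : A ⊆ B) (hB : B ⊆ M.E)
    (h : M.rk B = B.card) : M.rk A = A.card := by
  have hA : A ⊆ M.E := hAB.trans hB
  have hsub := M.rk_submod A (B \ A) hA ((Finset.sdiff_subset).trans hB)
  rw [Finset.union_sdiff_of_subset hAB] at hsub
  have h1 : M.rk (B \ A) ≤ (B \ A).card := M.rk_le_card _ ((Finset.sdiff_subset).trans hB)
  have h2 : (B \ A).card = B.card - A.card := Finset.card_sdiff_of_subset hAB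
  have h3 : A.card ≤ B.card := Finset.card_le_card hAB
  have h4 : M.rk A ≤ A.card := M.rk_le_card _ hA
  omega

end FinMatroid
end Aux
section Aux2

open Finset Submodule Module

namespace FinMatroid

variable {α : Type*} [DecidableEq α]

lemma two_add_self (v : Fin m → ZMod 2) : v + v = 0 := by
  funext i
  have : ∀ a : ZMod 2, a + a = 0 := by decide
  exact this (v i)

lemma two_eq_of_add_eq_zero {a b : Fin m → ZMod 2} (h : a + b = 0) : a = b := by
  have := two_add_self b
  calc a = a + (b + b) := by rw [this, add_zero]
    _ = (a + b) + b := by ring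
    _ = b := by rw [h, zero_add]

variable {m : ℕ} (M : FinMatroid α) (φ : α → Fin m → ZMod 2)

/-- Membership in the GF(2)-span of the image of a finite set is equivalent to
being a subset sum. -/
lemma mem_span_iff_subset_sum (A : Finset α) (v : Fin m → ZMod 2) :
    v ∈ span (ZMod 2) (φ '' (A : Set α)) ↔ ∃ P ⊆ A, ∑ e ∈ P, φ e = v := by
  classical
  constructor
  · intro hv
    let W : Submodule (ZMod 2) (Fin m → ZMod 2) :=
      { carrier := {w | ∃ P ⊆ A, ∑ e ∈ P, φ e = w}
        zero_mem' := ⟨∅, Finset.empty_subset _, by simp⟩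
        add_mem' := by
          rintro a b ⟨P, hP, rfl⟩ ⟨Q, hQ, rfl⟩
          refine ⟨(P ∪ Q) \ (P ∩ Q), (Finset.sdiff_subset).trans (Finset.union_subset hP hQ), ?_⟩
          have h1 : ∑ e ∈ (P ∪ Q) \ (P ∩ Q), φ e + ∑ e ∈ P ∩ Q, φ e = ∑ e ∈ P ∪ Q, φ e :=
            Finset.sum_sdiff (Finset.inter_subset_union)
          have h2 : ∑ e ∈ P ∪ Q, φ e + ∑ e ∈ P ∩ Q, φ e = ∑ e ∈ P, φ e + ∑ e ∈ Q, φ e :=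
            Finset.sum_union_inter
          have h3 := two_add_self (∑ e ∈ P ∩ Q, φ e)
          calc ∑ e ∈ (P ∪ Q) \ (P ∩ Q), φ e
              = ∑ e ∈ (P ∪ Q) \ (P ∩ Q), φ e + (∑ e ∈ P ∩ Q, φ e + ∑ e ∈ P ∩ Q, φ e) := by
                rw [h3, add_zero]
            _ = (∑ e ∈ (P ∪ Q) \ (P ∩ Q), φ e + ∑ e ∈ P ∩ Q, φ e) + ∑ e ∈ P ∩ Q, φ e := by ring
            _ = ∑ e ∈ P, φ e + ∑ e ∈ Q, φ e := by rw [h1, h2]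
        smul_mem' := by
          rintro c a ⟨P, hP, rfl⟩
          have hc : c = 0 ∨ c = 1 := by revert c; decide
          rcases hc with rfl | rfl
          · exact ⟨∅, Finset.empty_subset _, by simp⟩
          · exact ⟨P, hP, by simp⟩ }
    have hle : span (ZMod 2) (φ '' (A : Set α)) ≤ W := by
      rw [Submodule.span_le]
      rintro w ⟨a, ha, rfl⟩
      exact ⟨{a}, Finset.singleton_subset_iff.mpr (by exact_mod_cast ha), by simp⟩
    exact hle hv
  · rintro ⟨P, hP, rfl⟩
    exact Submodule.sum_mem _ fun e he =>
      Submodule.subset_span ⟨e, by exact_mod_cast hP he, rfl⟩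

variable (hφ : ∀ A : Finset α, A ⊆ M.E →
    M.rk A = Module.finrank (ZMod 2) (Submodule.span (ZMod 2) (φ '' (A : Set α))))

include hφ

lemma span_eq_of_rk_eq {A B : Finset α} (hAB : A ⊆ B) (hB : B ⊆ M.E)
    (h : M.rk A = M.rk B) :
    span (ZMod 2) (φ '' (A : Set α)) = span (ZMod 2) (φ '' (B : Set α)) := by
  have hA : A ⊆ M.E := hAB.trans hB
  have hle : span (ZMod 2) (φ '' (A : Set α)) ≤ span (ZMod 2) (φ '' (B : Set α)) :=
    Submodule.span_mono (Set.image_mono (by exact_mod_cast hAB))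
  exact Submodule.eq_of_le_of_finrank_le hle (by rw [← hφ A hA, ← hφ B hB, h])

lemma rk_insert_eq_iff {A : Finset α} {e : α} (hA : A ⊆ M.E) (he : e ∈ M.E) :
    M.rk (insert e A) = M.rk A ↔ φ e ∈ span (ZMod 2) (φ '' (A : Set α)) := by
  have hiA : insert e A ⊆ M.E := Finset.insert_subset he hA
  have himg : (φ '' ((insert e A : Finset α) : Set α)) = insert (φ e) (φ '' (A : Set α)) := by
    rw [Finset.coe_insert, Set.image_insert_eq]
  constructor
  · intro h
    have hsp := M.span_eq_of_rk_eq φ hφ (Finset.subset_insert e A) hiA h.symm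
    have : φ e ∈ span (ZMod 2) (φ '' ((insert e A : Finset α) : Set α)) :=
      Submodule.subset_span (by rw [himg]; exact Set.mem_insert _ _)
    rwa [← hsp] at this
  · intro h
    rw [hφ _ hiA, hφ _ hA, himg, Submodule.span_insert_eq_span h]

lemma rk_erase_eq_iff {A : Finset α} {e : α} (hA : A ⊆ M.E) (he : e ∈ A) :
    M.rk (A.erase e) = M.rk A ↔ φ e ∈ span (ZMod 2) (φ '' ((A.erase e : Finset α) : Set α)) := by
  have h1 : insert e (A.erase e) = A := Finset.insert_erase he
  have h2 : A.erase e ⊆ M.E := (Finset.erase_subset _ _).trans hA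
  have h3 := M.rk_insert_eq_iff φ hφ h2 (hA he)
  rw [h1] at h3
  rw [← h3]
  constructor <;> (intro h; omega)

lemma zerosum_rk_erase {D : Finset α} (hD : D ⊆ M.E)
    (hsum : ∑ e ∈ D, φ e = 0) {d : α} (hd : d ∈ D) :
    M.rk (D.erase d) = M.rk D := by
  rw [M.rk_erase_eq_iff φ hφ hD hd]
  have h1 : ∑ e ∈ D.erase d, φ e + φ d = ∑ e ∈ D, φ e := Finset.sum_erase_add _ _ hd
  rw [hsum] at h1
  have : φ d = ∑ e ∈ D.erase d, φ e := (two_eq_of_add_eq_zero h1).symm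
  rw [this]
  exact Submodule.sum_mem _ fun e he => Submodule.subset_span ⟨e, by exact_mod_cast he, rfl⟩

lemma zerosum_rk_lt {D : Finset α} (hD : D ⊆ M.E) (hne : D.Nonempty)
    (hsum : ∑ e ∈ D, φ e = 0) : M.rk D < D.card := by
  obtain ⟨d, hd⟩ := hne
  have h1 := M.zerosum_rk_erase φ hφ hD hsum hd
  have h2 : M.rk (D.erase d) ≤ (D.erase d).card :=
    M.rk_le_card _ ((Finset.erase_subset _ _).trans hD)
  have h3 : (D.erase d).card = D.card - 1 := Finset.card_erase_of_mem hd
  have h4 : 1 ≤ D.card := Finset.card_pos.mpr ⟨d, hd⟩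
  omega

lemma exists_zerosum_of_rk_lt :
    ∀ (n : ℕ) (A : Finset α), A.card ≤ n → A ⊆ M.E → M.rk A < A.card →
    ∃ Z ⊆ A, Z.Nonempty ∧ ∑ e ∈ Z, φ e = 0 := by
  intro n
  induction n with
  | zero => intro A hA _ hlt; omega
  | succ n ih =>
    intro A hcard hAE hlt
    have hne : A.Nonempty := Finset.card_pos.mp (by omega)
    obtain ⟨a, ha⟩ := hne
    by_cases h : M.rk (A.erase a) = M.rk A
    · rw [M.rk_erase_eq_iff φ hφ hAE ha] at h
      rw [mem_span_iff_subset_sum φ] at h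
      obtain ⟨P, hP, hPsum⟩ := h
      refine ⟨insert a P, Finset.insert_subset ha (hP.trans (Finset.erase_subset _ _)), ⟨a, Finset.mem_insert_self _ _⟩, ?_⟩
      have haP : a ∉ P := fun hc => (Finset.notMem_erase a A) (hP hc)
      rw [Finset.sum_insert haP, hPsum]
      exact two_add_self _
    · have hE : A.erase a ⊆ M.E := (Finset.erase_subset _ _).trans hAE
      have hle : M.rk (A.erase a) ≤ M.rk A := M.rk_mono _ _ (Finset.erase_subset _ _) hAE
      have hcarde : (A.erase a).card = A.card - 1 := Finset.card_erase_of_mem ha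
      have h1 : 1 ≤ A.card := Finset.card_pos.mpr ⟨a, ha⟩
      obtain ⟨Z, hZ, hZne, hZsum⟩ := ih (A.erase a) (by omega) hE (by omega)
      exact ⟨Z, hZ.trans (Finset.erase_subset _ _), hZne, hZsum⟩

end FinMatroid
end Aux2
section Aux3

open Finset Submodule Module

namespace FinMatroid

variable {α : Type*} [DecidableEq α] {m : ℕ} (M : FinMatroid α) (φ : α → Fin m → ZMod 2)

variable (hφ : ∀ A : Finset α, A ⊆ M.E →
    M.rk A = Module.finrank (ZMod 2) (Submodule.span (ZMod 2) (φ '' (A : Set α))))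

include hφ

lemma phi_inj (hs : M.Simple) {e f : α} (he : e ∈ M.E) (hf : f ∈ M.E)
    (h : φ e = φ f) : e = f := by
  by_contra hne
  have h2 := hs.2 e he f hf hne
  have h3 := hφ {e, f} (Finset.insert_subset he (Finset.singleton_subset_iff.mpr hf))
  have himg : φ '' (({e, f} : Finset α) : Set α) = {φ e} := by
    simp [Set.image_pair, h]
  rw [himg] at h3
  have h4 : finrank (ZMod 2) (span (ZMod 2) ({φ e} : Set (Fin m → ZMod 2))) ≤ 1 := by
    by_cases hz : φ e = 0
    · rw [hz, Submodule.span_zero_singleton, finrank_bot]; omega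
    · rw [finrank_span_singleton hz]
  omega

lemma step_lemma (hs : M.Simple) {F G : Finset α} (hF : M.IsCyclicFlat F) {x : α}
    (hx : x ∈ F) (hG : M.IsCyclicFlat G) (hGne : G.Nonempty) (hGF : G ⊂ F) :
    ∃ H, M.IsCyclicFlat H ∧ x ∈ H ∧ H ⊂ F := by
  classical
  obtain ⟨hFE, hFcl, hFcyc⟩ := hF
  have hcycF := (M.cyc_eq_self_iff).mp hFcyc
  -- a zero-sum subset through x exists
  have hx1 : M.rk (F.erase x) = M.rk F := hcycF x hx
  have hx2 : φ x ∈ span (ZMod 2) (φ '' ((F.erase x : Finset α) : Set α)) :=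
    (M.rk_erase_eq_iff φ hφ hFE hx).mp hx1
  obtain ⟨P0, hP0, hP0sum⟩ := (mem_span_iff_subset_sum φ _ _).mp hx2
  set T : Finset (Finset α) :=
    F.powerset.filter (fun C => x ∈ C ∧ ∑ e ∈ C, φ e = 0) with hT
  have hC0 : insert x P0 ∈ T := by
    refine Finset.mem_filter.mpr ⟨Finset.mem_powerset.mpr
      (Finset.insert_subset hx (hP0.trans (Finset.erase_subset _ _))), Finset.mem_insert_self _ _, ?_⟩
    have hxP0 : x ∉ P0 := fun hc => (Finset.notMem_erase x F) (hP0 hc)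
    rw [Finset.sum_insert hxP0, hP0sum]
    exact two_add_self _
  obtain ⟨C, hCT, hCmin⟩ := T.exists_min_image Finset.card ⟨_, hC0⟩
  have hCF : C ⊆ F := Finset.mem_powerset.mp (Finset.mem_filter.mp hCT).1
  have hxC : x ∈ C := (Finset.mem_filter.mp hCT).2.1
  have hCsum : ∑ e ∈ C, φ e = 0 := (Finset.mem_filter.mp hCT).2.2
  have hCE : C ⊆ M.E := hCF.trans hFE
  have hCexE : C.erase x ⊆ M.E := (Finset.erase_subset _ _).trans hCE
  -- C.erase x is independent
  have hCex_indep : M.rk (C.erase x) = (C.erase x).card := by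
    by_contra hne
    have hlt : M.rk (C.erase x) < (C.erase x).card :=
      lt_of_le_of_ne (M.rk_le_card _ hCexE) hne
    obtain ⟨Z, hZ, hZne, hZsum⟩ :=
      M.exists_zerosum_of_rk_lt φ hφ (C.erase x).card _ le_rfl hCexE hlt
    have hZC : Z ⊆ C := hZ.trans (Finset.erase_subset _ _)
    have hxZ : x ∉ Z := fun h => (Finset.notMem_erase x C) (hZ h)
    have hsd : ∑ e ∈ C \ Z, φ e = 0 := by
      have h5 : ∑ e ∈ C \ Z, φ e + ∑ e ∈ Z, φ e = ∑ e ∈ C, φ e := Finset.sum_sdiff hZC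
      rw [hZsum, add_zero, hCsum] at h5
      exact h5
    have hmem : C \ Z ∈ T := Finset.mem_filter.mpr
      ⟨Finset.mem_powerset.mpr ((Finset.sdiff_subset).trans hCF),
        Finset.mem_sdiff.mpr ⟨hxC, hxZ⟩, hsd⟩
    have hc1 : (C \ Z).card = C.card - Z.card := Finset.card_sdiff_of_subset hZC
    have hc2 : 1 ≤ Z.card := Finset.card_pos.mpr hZne
    have hc3 : Z.card ≤ C.card := Finset.card_le_card hZC
    have := hCmin _ hmem
    omega
  have hCcard : 1 ≤ C.card := Finset.card_pos.mpr ⟨x, hxC⟩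
  have hCerase_rk : M.rk (C.erase x) = M.rk C := M.zerosum_rk_erase φ hφ hCE hCsum hxC
  have hrkC : M.rk C = C.card - 1 := by
    have h2 : (C.erase x).card = C.card - 1 := Finset.card_erase_of_mem hxC
    omega
  have hrkCF : M.rk C ≤ M.rk F := M.rk_mono _ _ hCF hFE
  by_cases hr : M.rk C < M.rk F
  · refine ⟨M.cl C, M.isCyclicFlat_cl hCE
      (fun e he => M.zerosum_rk_erase φ hφ hCE hCsum he), M.subset_cl hCE hxC, ?_⟩
    have hsub : M.cl C ⊆ F := by have := M.cl_mono hCF hFE; rwa [hFcl] at this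
    have hne : M.cl C ≠ F := fun h => by
      have h2 := M.rk_cl hCE; rw [h] at h2; omega
    exact Finset.ssubset_iff_subset_ne.mpr ⟨hsub, hne⟩
  · have hr' : M.rk C = M.rk F := le_antisymm hrkCF (not_lt.mp hr)
    by_cases hFC : F ⊆ C
    · -- then F = C; contradiction using G
      exfalso
      have hFeqC : F = C := Finset.Subset.antisymm hFC hCF
      obtain ⟨hGE, hGcl, hGcyc⟩ := hG
      obtain ⟨g, hg⟩ := hGne
      have h1 : M.rk (G.erase g) = M.rk G := (M.cyc_eq_self_iff).mp hGcyc g hg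
      have h2 : φ g ∈ span (ZMod 2) (φ '' ((G.erase g : Finset α) : Set α)) :=
        (M.rk_erase_eq_iff φ hφ hGE hg).mp h1
      obtain ⟨P, hP, hPsum⟩ := (mem_span_iff_subset_sum φ _ _).mp h2
      have hgP : g ∉ P := fun h => (Finset.notMem_erase g G) (hP h)
      have hDsub : insert g P ⊆ G :=
        Finset.insert_subset hg (hP.trans (Finset.erase_subset _ _))
      have hDsum : ∑ e ∈ insert g P, φ e = 0 := by
        rw [Finset.sum_insert hgP, hPsum]
        exact two_add_self _
      by_cases hxD : x ∈ insert g P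
      · have hDT : insert g P ∈ T := Finset.mem_filter.mpr
          ⟨Finset.mem_powerset.mpr (hDsub.trans hGF.subset), hxD, hDsum⟩
        have hmin := hCmin _ hDT
        have hcards : (insert g P).card ≤ G.card := Finset.card_le_card hDsub
        have hlt : G.card < F.card := Finset.card_lt_card hGF
        rw [hFeqC] at hlt
        omega
      · have hDCex : insert g P ⊆ C.erase x := fun d hd =>
          Finset.mem_erase.mpr ⟨fun h => hxD (h ▸ hd), by
            have : d ∈ F := hGF.subset (hDsub hd)
            rwa [hFeqC] at this⟩
        have hrkD : M.rk (insert g P) = (insert g P).card :=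
          M.rk_eq_card_of_subset hDCex hCexE hCex_indep
        have hlt := M.zerosum_rk_lt φ hφ (hDsub.trans hGE)
          ⟨g, Finset.mem_insert_self _ _⟩ hDsum
        omega
    · obtain ⟨g0, hg0F, hg0C⟩ : ∃ g0 ∈ F, g0 ∉ C := by
        by_contra h; push_neg at h; exact hFC h
      have hsp1 : span (ZMod 2) (φ '' ((C.erase x : Finset α) : Set α)) =
          span (ZMod 2) (φ '' (C : Set α)) :=
        M.span_eq_of_rk_eq φ hφ (Finset.erase_subset _ _) hCE hCerase_rk
      have hsp2 : span (ZMod 2) (φ '' (C : Set α)) = span (ZMod 2) (φ '' (F : Set α)) :=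
        M.span_eq_of_rk_eq φ hφ hCF hFE hr'
      have hmem : φ g0 ∈ span (ZMod 2) (φ '' ((C.erase x : Finset α) : Set α)) := by
        rw [hsp1, hsp2]
        exact Submodule.subset_span ⟨g0, by exact_mod_cast hg0F, rfl⟩
      obtain ⟨P, hP, hPsum⟩ := (mem_span_iff_subset_sum φ _ _).mp hmem
      have hPne : P.Nonempty := by
        rcases Finset.eq_empty_or_nonempty P with rfl | h
        · exfalso
          have hz : φ g0 = 0 := by rw [← hPsum]; simp
          have h1 := hs.1 g0 (hFE hg0F)
          have h3 := hφ {g0} (Finset.singleton_subset_iff.mpr (hFE hg0F))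
          have himg : φ '' (({g0} : Finset α) : Set α) = {(0 : Fin m → ZMod 2)} := by
            simp [hz]
          rw [himg, Submodule.span_zero_singleton] at h3
          rw [finrank_bot] at h3
          omega
        · exact h
      have hPcard : 2 ≤ P.card := by
        have h1 : 1 ≤ P.card := Finset.card_pos.mpr hPne
        rcases Nat.lt_or_ge P.card 2 with h2 | h2
        · exfalso
          have : P.card = 1 := by omega
          obtain ⟨e, rfl⟩ := Finset.card_eq_one.mp this
          have hef : φ e = φ g0 := by simpa using hPsum
          have heC : e ∈ C := (Finset.erase_subset _ _) (hP (Finset.mem_singleton_self e))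
          have := M.phi_inj φ hφ hs (hCE heC) (hFE hg0F) hef
          exact hg0C (this ▸ heC)
        · exact h2
      have hg0CP : g0 ∉ C \ P := fun h => hg0C (Finset.mem_sdiff.mp h).1
      have hPC : P ⊆ C := hP.trans (Finset.erase_subset _ _)
      have hsum1 : ∑ e ∈ C \ P, φ e + ∑ e ∈ P, φ e = 0 := by
        rw [Finset.sum_sdiff hPC, hCsum]
      have hsum2 : ∑ e ∈ C \ P, φ e = ∑ e ∈ P, φ e := two_eq_of_add_eq_zero hsum1
      have hSsum : ∑ e ∈ insert g0 (C \ P), φ e = 0 := by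
        rw [Finset.sum_insert hg0CP, hsum2, hPsum]
        exact two_add_self _
      have hxS : x ∈ insert g0 (C \ P) := Finset.mem_insert_of_mem
        (Finset.mem_sdiff.mpr ⟨hxC, fun h => (Finset.notMem_erase x C) (hP h)⟩)
      have hSF : insert g0 (C \ P) ⊆ F :=
        Finset.insert_subset hg0F ((Finset.sdiff_subset).trans hCF)
      have hSE : insert g0 (C \ P) ⊆ M.E := hSF.trans hFE
      have hScard : (insert g0 (C \ P)).card = C.card - P.card + 1 := by
        rw [Finset.card_insert_of_notMem hg0CP, Finset.card_sdiff_of_subset hPC]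
      have hrkS : M.rk (insert g0 (C \ P)) < M.rk F := by
        have h1 := M.zerosum_rk_lt φ hφ hSE ⟨x, hxS⟩ hSsum
        have h2 : P.card ≤ C.card := Finset.card_le_card hPC
        omega
      refine ⟨M.cl (insert g0 (C \ P)), M.isCyclicFlat_cl hSE
        (fun e he => M.zerosum_rk_erase φ hφ hSE hSsum he), M.subset_cl hSE hxS, ?_⟩
      have hsub : M.cl (insert g0 (C \ P)) ⊆ F := by
        have := M.cl_mono hSF hFE; rwa [hFcl] at this
      have hne : M.cl (insert g0 (C \ P)) ≠ F := fun h => by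
        have h2 := M.rk_cl hSE; rw [h] at h2; omega
      exact Finset.ssubset_iff_subset_ne.mpr ⟨hsub, hne⟩

lemma exists_atom_aux (hs : M.Simple) :
    ∀ (n : ℕ) (F : Finset α), F.card ≤ n → M.IsCyclicFlat F → ∀ x ∈ F,
      ∃ Z, M.IsAtomCF Z ∧ Z ⊆ F ∧ x ∈ Z := by
  intro n
  induction n with
  | zero =>
    intro F hcard _ x hx
    have : F = ∅ := Finset.card_eq_zero.mp (Nat.le_zero.mp hcard)
    simp [this] at hx
  | succ n ih =>
    intro F hcard hF x hx
    by_cases hat : M.IsAtomCF F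
    · exact ⟨F, hat, Finset.Subset.refl _, hx⟩
    · have hFne : F ≠ ∅ := Finset.ne_empty_of_mem hx
      have hex : ∃ G, M.IsCyclicFlat G ∧ ∅ ⊂ G ∧ G ⊂ F := by
        by_contra hno
        exact hat ⟨hF, hFne, hno⟩
      obtain ⟨G, hG, hGne, hGF⟩ := hex
      have hGne' : G.Nonempty :=
        Finset.nonempty_iff_ne_empty.mpr (fun h => hGne.ne' h)
      obtain ⟨H, hH, hxH, hHF⟩ := M.step_lemma φ hφ hs hF hx hG hGne' hGF
      have hHcard : H.card < F.card := Finset.card_lt_card hHF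
      obtain ⟨Z, hZ1, hZ2, hZ3⟩ := ih H (by omega) hH x hxH
      exact ⟨Z, hZ1, hZ2.trans hHF.subset, hZ3⟩

end FinMatroid
end Aux3

open Classical in
/-- In a simple binary matroid with no isthmuses, every cyclic flat `Y`
is the union of the atoms of the lattice of cyclic flats contained in it; in
particular `Z(M)` is atomic. -/
theorem cyclicFlat_eq_union_atoms {α : Type*} [DecidableEq α] (M : FinMatroid α)
    (hs : M.Simple) (hni : M.NoIsthmus) (hb : M.IsBinary)
    (Y : Finset α) (hY : M.IsCyclicFlat Y) :
    Y = (M.E.powerset.filter fun Z => M.IsAtomCF Z ∧ Z ⊆ Y).biUnion id := by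
  classical
  obtain ⟨m, φ, hφ⟩ := hb
  ext a
  simp only [Finset.mem_biUnion, Finset.mem_filter, Finset.mem_powerset, id]
  constructor
  · intro ha
    obtain ⟨Z, hZatom, hZY, haZ⟩ :=
      M.exists_atom_aux φ hφ hs Y.card Y le_rfl hY a ha
    exact ⟨Z, ⟨hZatom.1.1, hZatom, hZY⟩, haZ⟩
  · rintro ⟨Z, ⟨_, _, hZY⟩, haZ⟩
    exact hZY haZ
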